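/- Let n ≥ 2, S ⊆ ℤ^n, and g : ℤ^k → ℤ an operation. Consider the properties: (i) S is closed under some majority operation and under g; (ii) S is closed under some majority operation, and for each 1 ≤ i < j ≤ n, π_{i,j}(S) is g-closed; (iii) S = ⋈_{1≤i<j≤n} π_{i,j}(S), and for each 1 ≤ i < j ≤ n, π_{i,j}(S) is g-closed; (iv) S = ⋈_{1≤i<j≤n} cl_g(π_{i,j}(S)). Then (i) ⇔ (ii), (ii) ⇒ (iii), and (iii) ⇔ (iv). -/
import Mathlib


/-- Componentwise closedness of a set of `ι`-indexed integer vectors under a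
`k`-ary operation `f : ℤ^k → ℤ`. -/
def CptClosed {k : ℕ} {ι : Type*} (f : (Fin k → ℤ) → ℤ) (S : Set (ι → ℤ)) : Prop :=
  ∀ x : Fin k → ι → ℤ, (∀ l, x l ∈ S) → (fun i => f (fun l => x l i)) ∈ S

/-- `f : ℤ³ → ℤ` is a majority operation. -/
def IsMajorityOp (f : (Fin 3 → ℤ) → ℤ) : Prop :=
  ∀ a b : ℤ, f ![a, a, b] = a ∧ f ![a, b, a] = a ∧ f ![b, a, a] = a

/-- `S` is closed under some majority operation. -/
def MajClosed {ι : Type*} (S : Set (ι → ℤ)) : Prop :=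
  ∃ f : (Fin 3 → ℤ) → ℤ, IsMajorityOp f ∧ CptClosed f S

/-- The projection `π_{i,j}(x) = (x_i, x_j)`. -/
def proj2 {n : ℕ} (i j : Fin n) (x : Fin n → ℤ) : Fin 2 → ℤ := ![x i, x j]

/-- The projection `π_{i,j}(S)`. -/
def projSet {n : ℕ} (i j : Fin n) (S : Set (Fin n → ℤ)) : Set (Fin 2 → ℤ) :=
  proj2 i j '' S

/-- The join `⋈_{1 ≤ i < j ≤ n} F i j`. -/
def joinPairs {n : ℕ} (F : Fin n → Fin n → Set (Fin 2 → ℤ)) : Set (Fin n → ℤ) :=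
  {x | ∀ i j : Fin n, i < j → proj2 i j x ∈ F i j}

/-- The `f`-closure of `S`: the intersection of all `f`-closed supersets of `S`. -/
def clOp {k m : ℕ} (f : (Fin k → ℤ) → ℤ) (S : Set (Fin m → ℤ)) : Set (Fin m → ℤ) :=
  ⋂₀ {T | S ⊆ T ∧ CptClosed f T}

/-- The directed discrete midpoint operation `μ`. -/
def muOp : (Fin 2 → ℤ) → ℤ := fun t =>
  if t 1 ≤ t 0 then ⌈((t 0 + t 1 : ℤ) : ℚ) / 2⌉ else ⌊((t 0 + t 1 : ℤ) : ℚ) / 2⌋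

/-- The operation `g(x,y) = ⌈(x+y)/2⌉`. -/
def ceilAvgOp : (Fin 2 → ℤ) → ℤ := fun t => ⌈((t 0 + t 1 : ℤ) : ℚ) / 2⌉

/-- The operation `h(x,y) = ⌊(x+y)/2⌋`. -/
def floorAvgOp : (Fin 2 → ℤ) → ℤ := fun t => ⌊((t 0 + t 1 : ℤ) : ℚ) / 2⌋

/-- The median operation on three integers. -/
def medianOp : (Fin 3 → ℤ) → ℤ := fun t =>
  max (max (min (t 0) (t 1)) (min (t 1) (t 2))) (min (t 0) (t 2))

/-- The canonical embedding `ℤ^m → ℝ^m`. -/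
def toR {m : ℕ} (z : Fin m → ℤ) : Fin m → ℝ := fun l => (z l : ℝ)

/-- The integer neighborhood `N(x)` of a real vector `x`. -/
def intNbhd {m : ℕ} (x : Fin m → ℝ) : Set (Fin m → ℤ) :=
  {z | ∀ j, |(z j : ℝ) - x j| < 1}

/-- `S` is midpoint-neighbor-closed: for all `x, y ∈ S`, `N((x+y)/2) ⊆ S`. -/
def MidpointNeighborClosed {m : ℕ} (S : Set (Fin m → ℤ)) : Prop :=
  ∀ x ∈ S, ∀ y ∈ S, ∀ z : Fin m → ℤ,
    (∀ j, |(z j : ℝ) - ((x j : ℝ) + (y j : ℝ)) / 2| < 1) → z ∈ S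

/-- `S ⊆ ℤ^m` is integrally convex. -/
def IntegrallyConvex {m : ℕ} (S : Set (Fin m → ℤ)) : Prop :=
  ∀ x : Fin m → ℝ, x ∈ convexHull ℝ (toR '' S) →
    x ∈ convexHull ℝ (toR '' (S ∩ intNbhd x))

/-- The closed convex closure of `T ⊆ ℤ^m` inside `ℝ^m`: the intersection of all
topologically closed convex sets containing `T`. -/
def closedConvexClosure {m : ℕ} (T : Set (Fin m → ℤ)) : Set (Fin m → ℝ) :=
  ⋂₀ {C : Set (Fin m → ℝ) | Convex ℝ C ∧ IsClosed C ∧ toR '' T ⊆ C}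

/-- `S = cl_conv̄(S) ∩ ℤ^m`. -/
def ClosedConvexIntegral {m : ℕ} (S : Set (Fin m → ℤ)) : Prop :=
  S = {z : Fin m → ℤ | toR z ∈ closedConvexClosure S}

/-- All entries of `A` lie in `{0, -1, +1}`. -/
def UnitMatrix {mR n : ℕ} (A : Matrix (Fin mR) (Fin n) ℤ) : Prop :=
  ∀ i j, A i j = 0 ∨ A i j = -1 ∨ A i j = 1

/-- Each row of `A` has at most `c` nonzero entries. -/
def RowSupportLE {mR n : ℕ} (A : Matrix (Fin mR) (Fin n) ℤ) (c : ℕ) : Prop :=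
  ∀ i, {j | A i j ≠ 0}.ncard ≤ c

/-- `S` is representable by a UTVPI system. -/
def RepUTVPI {n : ℕ} (S : Set (Fin n → ℤ)) : Prop :=
  ∃ (mR : ℕ) (A : Matrix (Fin mR) (Fin n) ℤ) (b : Fin mR → ℝ),
    UnitMatrix A ∧ RowSupportLE A 2 ∧
    S = {x | ∀ i, b i ≤ ((∑ j, A i j * x j : ℤ) : ℝ)}

/-- `S` is representable by an SVPI system. -/
def RepSVPI {n : ℕ} (S : Set (Fin n → ℤ)) : Prop :=
  ∃ (mR : ℕ) (A : Matrix (Fin mR) (Fin n) ℤ) (b : Fin mR → ℝ),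
    UnitMatrix A ∧ RowSupportLE A 1 ∧
    S = {x | ∀ i, b i ≤ ((∑ j, A i j * x j : ℤ) : ℝ)}

/-- `S` is representable by a DC system. -/
def RepDC {n : ℕ} (S : Set (Fin n → ℤ)) : Prop :=
  ∃ (mR : ℕ) (A : Matrix (Fin mR) (Fin n) ℤ) (b : Fin mR → ℝ),
    UnitMatrix A ∧
    (∀ i, {j | A i j = 1}.ncard ≤ 1) ∧ (∀ i, {j | A i j = -1}.ncard ≤ 1) ∧
    S = {x | ∀ i, b i ≤ ((∑ j, A i j * x j : ℤ) : ℝ)}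

/-- `S` is representable by a TVPI system with possibly infinitely many inequalities. -/
def RepTVPIInf {n : ℕ} (S : Set (Fin n → ℤ)) : Prop :=
  ∃ (I : Type) (a1 a2 b : I → ℝ) (p q : I → Fin n),
    S = {x | ∀ i : I, b i ≤ a1 i * (x (p i) : ℝ) + a2 i * (x (q i) : ℝ)}

/-- `S` is 2-decomposable: `S = ⋈_{i<j} π_{i,j}(S)`. -/
def TwoDecomposable {ι : Type*} [LinearOrder ι] (S : Set (ι → ℤ)) : Prop :=
  S = {x | ∀ i j : ι, i < j → ∃ s ∈ S, s i = x i ∧ s j = x j}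

lemma fin2_ext {p q : Fin 2 → ℤ} (h0 : p 0 = q 0) (h1 : p 1 = q 1) : p = q := by
  funext u; fin_cases u <;> assumption

lemma mem_projSet {n : ℕ} {i j : Fin n} {S : Set (Fin n → ℤ)} {p : Fin 2 → ℤ} :
    p ∈ projSet i j S ↔ ∃ s ∈ S, s i = p 0 ∧ s j = p 1 := by
  constructor
  · rintro ⟨s, hs, rfl⟩
    exact ⟨s, hs, by simp [proj2], by simp [proj2]⟩
  · rintro ⟨s, hs, h0, h1⟩
    exact ⟨s, hs, fin2_ext (by simp [proj2, h0]) (by simp [proj2, h1])⟩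

lemma subset_clOp {k m : ℕ} (f : (Fin k → ℤ) → ℤ) (S : Set (Fin m → ℤ)) :
    S ⊆ clOp f S := fun x hx => Set.mem_sInter.mpr fun _T hT => hT.1 hx

lemma clOp_closed {k m : ℕ} (f : (Fin k → ℤ) → ℤ) (S : Set (Fin m → ℤ)) :
    CptClosed f (clOp f S) := by
  intro x hx
  refine Set.mem_sInter.mpr fun T hT => ?_
  exact hT.2 x fun l => Set.mem_sInter.mp (hx l) T hT

lemma clOp_subset {k m : ℕ} {f : (Fin k → ℤ) → ℤ} {S T : Set (Fin m → ℤ)}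
    (h1 : S ⊆ T) (h2 : CptClosed f T) : clOp f S ⊆ T :=
  fun _x hx => Set.mem_sInter.mp hx T ⟨h1, h2⟩

lemma proj2_comp {n k : ℕ} (g : (Fin k → ℤ) → ℤ) (i j : Fin n) (x : Fin k → Fin n → ℤ) :
    proj2 i j (fun t => g (fun l => x l t)) = fun u => g (fun l => proj2 i j (x l) u) := by
  apply fin2_ext <;> simp [proj2]

/-- Baker–Pixley: a majority-closed set is determined by its pairwise projections. -/
lemma bp_mem {n : ℕ} (hn : 2 ≤ n) {S : Set (Fin n → ℤ)} (hS : MajClosed S)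
    (x : Fin n → ℤ) (hx : ∀ i j : Fin n, i < j → proj2 i j x ∈ projSet i j S) :
    x ∈ S := by
  obtain ⟨f, hf, hcl⟩ := hS
  have pair : ∀ a b : Fin n, a ≠ b → ∃ s ∈ S, s a = x a ∧ s b = x b := by
    intro a b hab
    rcases lt_or_gt_of_ne hab with h | h
    · obtain ⟨s, hs, h0, h1⟩ := mem_projSet.mp (hx a b h)
      exact ⟨s, hs, by simpa [proj2] using h0, by simpa [proj2] using h1⟩
    · obtain ⟨s, hs, h0, h1⟩ := mem_projSet.mp (hx b a h)
      exact ⟨s, hs, by simpa [proj2] using h1, by simpa [proj2] using h0⟩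
  have key : ∀ m, 2 ≤ m → ∀ F : Finset (Fin n), F.card = m →
      ∃ s ∈ S, ∀ i ∈ F, s i = x i := by
    intro m hm
    induction m, hm using Nat.le_induction with
    | base =>
      intro F hF
      obtain ⟨a, b, hab, rfl⟩ := Finset.card_eq_two.mp hF
      obtain ⟨s, hs, h1, h2⟩ := pair a b hab
      refine ⟨s, hs, ?_⟩
      intro i hi
      simp only [Finset.mem_insert, Finset.mem_singleton] at hi
      rcases hi with rfl | rfl <;> assumption
    | succ m hm ih =>
      intro F hF
      obtain ⟨a, ha⟩ := Finset.card_pos.mp (show 0 < F.card by omega)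
      have hcFa : (F.erase a).card = m := by
        rw [Finset.card_erase_of_mem ha, hF]; omega
      obtain ⟨b, hb⟩ := Finset.card_pos.mp (show 0 < (F.erase a).card by omega)
      have hbF : b ∈ F := Finset.mem_of_mem_erase hb
      have hba : b ≠ a := Finset.ne_of_mem_erase hb
      obtain ⟨c, hc⟩ := Finset.card_pos.mp
        (show 0 < ((F.erase a).erase b).card by
          rw [Finset.card_erase_of_mem hb, hcFa]; omega)
      have hcb : c ≠ b := Finset.ne_of_mem_erase hc
      have hcFa' : c ∈ F.erase a := Finset.mem_of_mem_erase hc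
      have hca : c ≠ a := Finset.ne_of_mem_erase hcFa'
      have hcF : c ∈ F := Finset.mem_of_mem_erase hcFa'
      have hcFb : (F.erase b).card = m := by
        rw [Finset.card_erase_of_mem hbF, hF]; omega
      have hcFc : (F.erase c).card = m := by
        rw [Finset.card_erase_of_mem hcF, hF]; omega
      obtain ⟨s1, hs1S, hs1⟩ := ih (F.erase a) hcFa
      obtain ⟨s2, hs2S, hs2⟩ := ih (F.erase b) hcFb
      obtain ⟨s3, hs3S, hs3⟩ := ih (F.erase c) hcFc
      have hyS : (fun t => f (fun l => (![s1, s2, s3] : Fin 3 → Fin n → ℤ) l t)) ∈ S := by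
        apply hcl
        intro l
        fin_cases l <;> simpa
      refine ⟨_, hyS, ?_⟩
      intro i hi
      have hval : (fun l => (![s1, s2, s3] : Fin 3 → Fin n → ℤ) l i)
          = ![s1 i, s2 i, s3 i] := by
        funext l; fin_cases l <;> simp
      show f (fun l => (![s1, s2, s3] : Fin 3 → Fin n → ℤ) l i) = x i
      rw [hval]
      by_cases hia : i = a
      · subst hia
        have h2 : s2 i = x i := hs2 i (Finset.mem_erase.mpr ⟨fun h => hba h.symm, hi⟩)
        have h3 : s3 i = x i := hs3 i (Finset.mem_erase.mpr ⟨fun h => hca h.symm, hi⟩)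
        rw [h2, h3]
        exact (hf (x i) (s1 i)).2.2
      by_cases hib : i = b
      · subst hib
        have h1 : s1 i = x i := hs1 i (Finset.mem_erase.mpr ⟨hia, hi⟩)
        have h3 : s3 i = x i := hs3 i (Finset.mem_erase.mpr ⟨fun h => hcb h.symm, hi⟩)
        rw [h1, h3]
        exact (hf (x i) (s2 i)).2.1
      by_cases hic : i = c
      · subst hic
        have h1 : s1 i = x i := hs1 i (Finset.mem_erase.mpr ⟨hia, hi⟩)
        have h2 : s2 i = x i := hs2 i (Finset.mem_erase.mpr ⟨hib, hi⟩)
        rw [h1, h2]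
        exact (hf (x i) (s3 i)).1
      · have h1 : s1 i = x i := hs1 i (Finset.mem_erase.mpr ⟨hia, hi⟩)
        have h2 : s2 i = x i := hs2 i (Finset.mem_erase.mpr ⟨hib, hi⟩)
        have h3 : s3 i = x i := hs3 i (Finset.mem_erase.mpr ⟨hic, hi⟩)
        rw [h1, h2, h3]
        exact (hf (x i) (x i)).1
  obtain ⟨s, hsS, hs⟩ := key n hn Finset.univ (by simp)
  have : s = x := funext fun i => hs i (Finset.mem_univ i)
  exact this ▸ hsS

/-- Projections of a `g`-closed set are `g`-closed. -/
lemma projSet_closed {n k : ℕ} {S : Set (Fin n → ℤ)} {g : (Fin k → ℤ) → ℤ}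
    (hg : CptClosed g S) (i j : Fin n) : CptClosed g (projSet i j S) := by
  intro p hp
  choose s hsS hs using fun l => hp l
  refine ⟨fun t => g (fun l => s l t), hg s hsS, ?_⟩
  rw [proj2_comp]
  funext u
  congr 1
  funext l
  rw [hs l]

/-- 2-decomposability and closure property induced by an operation `g`:
(i) ⇔ (ii), (ii) ⇒ (iii), (iii) ⇔ (iv). -/
theorem stmt_2 {n k : ℕ} (hn : 2 ≤ n) (hk : 1 ≤ k) (S : Set (Fin n → ℤ))
    (g : (Fin k → ℤ) → ℤ) :
    ((MajClosed S ∧ CptClosed g S) ↔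
      (MajClosed S ∧ ∀ i j : Fin n, i < j → CptClosed g (projSet i j S))) ∧
    ((MajClosed S ∧ ∀ i j : Fin n, i < j → CptClosed g (projSet i j S)) →
      (S = joinPairs (fun i j => projSet i j S) ∧
        ∀ i j : Fin n, i < j → CptClosed g (projSet i j S))) ∧
    ((S = joinPairs (fun i j => projSet i j S) ∧
        ∀ i j : Fin n, i < j → CptClosed g (projSet i j S)) ↔
      S = joinPairs (fun i j => clOp g (projSet i j S))) := by
  have hSjoin : MajClosed S → S = joinPairs (fun i j => projSet i j S) := by
    intro hm
    ext x
    simp only [joinPairs, Set.mem_setOf_eq]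
    constructor
    · intro hx i j hij
      exact ⟨x, hx, rfl⟩
    · intro hx
      exact bp_mem hn hm x hx
  refine ⟨?_, ?_, ?_⟩
  · -- (i) ↔ (ii)
    constructor
    · rintro ⟨hm, hg⟩
      exact ⟨hm, fun i j _ => projSet_closed hg i j⟩
    · rintro ⟨hm, hproj⟩
      refine ⟨hm, ?_⟩
      intro x hxS
      apply bp_mem hn hm
      intro i j hij
      have hmem := hproj i j hij (fun l => proj2 i j (x l)) (fun l => ⟨x l, hxS l, rfl⟩)
      rw [proj2_comp]
      exact hmem
  · -- (ii) → (iii)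
    rintro ⟨hm, hproj⟩
    exact ⟨hSjoin hm, hproj⟩
  · -- (iii) ↔ (iv)
    constructor
    · rintro ⟨hjoin, hproj⟩
      have hcl : ∀ i j : Fin n, i < j → clOp g (projSet i j S) = projSet i j S :=
        fun i j hij =>
          Set.Subset.antisymm (clOp_subset subset_rfl (hproj i j hij)) (subset_clOp _ _)
      conv_lhs => rw [hjoin]
      ext x
      simp only [joinPairs, Set.mem_setOf_eq]
      constructor
      · intro h i j hij
        rw [hcl i j hij]
        exact h i j hij
      · intro h i j hij
        have := h i j hij
        rw [hcl i j hij] at this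
        exact this
    · intro heq
      have hproj : ∀ i j : Fin n, i < j → CptClosed g (projSet i j S) := by
        intro i j _ p hp
        choose x hxS hx using fun l => hp l
        have hyJ : (fun t => g (fun l => x l t)) ∈
            joinPairs (fun a b => clOp g (projSet a b S)) := by
          simp only [joinPairs, Set.mem_setOf_eq]
          intro a b _
          rw [proj2_comp]
          exact clOp_closed g (projSet a b S) (fun l => proj2 a b (x l))
            (fun l => subset_clOp _ _ ⟨x l, hxS l, rfl⟩)
        have hyS : (fun t => g (fun l => x l t)) ∈ S := by
          rw [heq]; exact hyJ
        refine ⟨fun t => g (fun l => x l t), hyS, ?_⟩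
        rw [proj2_comp]
        funext u
        congr 1
        funext l
        rw [hx l]
      refine ⟨?_, hproj⟩
      have hcl : ∀ i j : Fin n, i < j → clOp g (projSet i j S) = projSet i j S :=
        fun i j hij =>
          Set.Subset.antisymm (clOp_subset subset_rfl (hproj i j hij)) (subset_clOp _ _)
      conv_lhs => rw [heq]
      ext x
      simp only [joinPairs, Set.mem_setOf_eq]
      constructor
      · intro h i j hij
        have := h i j hij
        rw [hcl i j hij] at this
        exact this
      · intro h i j hij
        rw [hcl i j hij]
        exact h i j hij
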